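/- From the inequality C(S_{j+1}) − C(S_j) ≥ (OPT_k − C(S_j))/k for all 0 ≤ j < k (with C(S_0) = 0), it follows by induction that OPT_k − C(S_k) ≤ (1 − 1/k)^k · OPT_k, i.e., C(S_k) ≥ (1 − (1 − 1/k)^k)·OPT_k. -/

import Mathlib

/-- Arithmetic induction completing the greedy analysis: if `a 0 = 0` and
`a (j+1) - a j ≥ (OPT - a j)/k` for all `j < k`, then
`OPT - a k ≤ (1 - 1/k)^k · OPT`, i.e. `a k ≥ (1 - (1 - 1/k)^k) · OPT`. -/
theorem greedy_induction_arithmetic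
    (k : ℕ) (hk : 1 ≤ k) (a : ℕ → ℝ) (OPT : ℝ)
    (hOPT : 0 ≤ OPT) (ha0 : a 0 = 0)
    (hstep : ∀ j, j < k → (OPT - a j) / k ≤ a (j + 1) - a j) :
    OPT - a k ≤ (1 - 1 / (k : ℝ)) ^ k * OPT ∧
    (1 - (1 - 1 / (k : ℝ)) ^ k) * OPT ≤ a k := by
  have hkpos : (0:ℝ) < k := by exact_mod_cast hk
  have hq0 : (0:ℝ) ≤ 1 - 1 / (k : ℝ) := by
    rw [sub_nonneg, div_le_one hkpos]; exact_mod_cast hk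
  have key : ∀ j, j ≤ k → OPT - a j ≤ (1 - 1 / (k : ℝ)) ^ j * OPT := by
    intro j hj
    induction j with
    | zero => simp [ha0]
    | succ n ih =>
      have hn : n < k := by omega
      have ihn := ih (le_of_lt hn)
      have hs := hstep n hn
      have : OPT - a (n + 1) ≤ (1 - 1 / (k:ℝ)) * (OPT - a n) := by
        have hexp : (1 - 1 / (k:ℝ)) * (OPT - a n) = (OPT - a n) - (OPT - a n) / k := by
          field_simp
        rw [hexp]; linarith
      calc OPT - a (n + 1) ≤ (1 - 1 / (k:ℝ)) * (OPT - a n) := this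
        _ ≤ (1 - 1 / (k:ℝ)) * ((1 - 1 / (k:ℝ)) ^ n * OPT) :=
            mul_le_mul_of_nonneg_left ihn hq0
        _ = (1 - 1 / (k:ℝ)) ^ (n+1) * OPT := by ring
  have h := key k le_rfl
  exact ⟨h, by nlinarith [h]⟩
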